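/- Sure attractor and avoiding cycles: let B be a BSCC of an LTS L and θ a state formula. Write S^θ_B = {s ∈ B : s satisfies θ}, SPred_B(U) = {s ∈ B : Succ(s) ⊆ U} for U ⊆ B, and SPred*_B(U) for the least fixed point of the operator V ↦ V ∪ SPred_B(V) containing U. Then SPred*_B(S^θ_B) = B if and only if B contains no θ-avoiding cycle. -/

import Mathlib

open scoped Classical
open MeasureTheory

/-- A labelled transition system: a finite set of states `S`, an initial state,
a transition relation in which every state has at least one successor, and a
labeling of states by sets of atomic propositions. -/
structure LTS (S AP : Type) where
  init : S
  T : S → S → Prop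
  lbl : S → Set AP
  succ_nonempty : ∀ s : S, ∃ t : S, T s t

variable {S AP : Type}

/-- A run of an LTS: an infinite sequence of states following the transitions. -/
def IsRun (L : LTS S AP) (ρ : ℕ → S) : Prop := ∀ i : ℕ, L.T (ρ i) (ρ (i + 1))

/-- The shifted run `ρ[i..]`. -/
def shift (ρ : ℕ → S) (i : ℕ) : ℕ → S := fun n => ρ (n + i)

/-- A state formula: a (possibly empty, i.e. `false`) disjunction of literals,
each literal being a polarity (`true` = positive) paired with an atomic proposition. -/
abbrev StateFormula (AP : Type) := List (Bool × AP)

/-- A state `s` satisfies a state formula `θ`. -/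
def SatState (L : LTS S AP) (θ : StateFormula AP) (s : S) : Prop :=
  ∃ p ∈ θ, if p.1 then p.2 ∈ L.lbl s else p.2 ∉ L.lbl s

/-- A (nonempty) finite path of the LTS. -/
def IsPath (L : LTS S AP) (u : List S) : Prop := u ≠ [] ∧ u.Chain' L.T

/-- A loop: a finite path with at least one transition whose first and last states coincide. -/
def IsLoop (L : LTS S AP) (u : List S) : Prop :=
  2 ≤ u.length ∧ u.Chain' L.T ∧ u.head? = u.getLast?

/-- The set `occ u` of states occurring in a finite sequence. -/
def occ (u : List S) : Set S := {s | s ∈ u}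

/-- Reachability along transitions. -/
def Reachable (L : LTS S AP) : S → S → Prop := Relation.ReflTransGen L.T

/-- A strongly connected component: an equivalence class of mutual reachability. -/
def IsSCC (L : LTS S AP) (C : Set S) : Prop :=
  ∃ s : S, C = {t : S | Reachable L s t ∧ Reachable L t s}

/-- A bottom strongly connected component: an SCC closed under transitions. -/
def IsBSCC (L : LTS S AP) (C : Set S) : Prop :=
  IsSCC L C ∧ ∀ s ∈ C, ∀ t : S, L.T s t → t ∈ C

/-- The sure attractor `SPred*_B(U)`: the least fixed point, above `U`, of the
operator `V ↦ V ∪ SPred_B(V)` where `SPred_B(V) = {s ∈ B : Succ(s) ⊆ V}`. -/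
def SPredStar (L : LTS S AP) (B U : Set S) : Set S :=
  ⋂₀ {W : Set S | U ⊆ W ∧ ∀ s ∈ B, (∀ t : S, L.T s t → t ∈ W) → s ∈ W}

/-- **sure attractor and avoiding cycles.** For a BSCC `B` of `L` and
a state formula `θ`: `SPred*_B(S^θ_B) = B` iff `B` contains no `θ`-avoiding cycle. -/
theorem sure_attractor_iff_no_avoiding_cycle [Fintype S] (L : LTS S AP) (B : Set S)
    (hB : IsBSCC L B) (θ : StateFormula AP) :
    SPredStar L B {s ∈ B | SatState L θ s} = B ↔
    ¬ ∃ u : List S, IsLoop L u ∧ occ u ⊆ B ∧ ∀ s ∈ u, ¬ SatState L θ s := by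
  constructor
  · rintro hEq ⟨u, ⟨hlen, hchain, hhl⟩, hocc, havoid⟩
    have hne : u ≠ [] := by intro h; simp [h] at hlen
    -- every state occurring in a loop has a successor occurring in the loop
    have hsucc : ∀ s ∈ u, ∃ t ∈ u, L.T s t := by
      intro s hs
      obtain ⟨⟨i, hi⟩, rfl⟩ := List.mem_iff_get.mp hs
      by_cases h : i + 1 < u.length
      · exact ⟨u.get ⟨i + 1, h⟩, List.get_mem _ _,
          List.isChain_iff_getElem.mp hchain i (by omega)⟩
      · have hieq : u.get ⟨i, hi⟩ = u.get ⟨0, by omega⟩ := by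
          have h1 : u.head? = some (u.get ⟨0, by omega⟩) := by
            cases u with
            | nil => simp at hne
            | cons a l => simp
          have h2 : u.getLast? = some (u.get ⟨i, hi⟩) := by
            rw [List.getLast?_eq_getLast hne, List.getLast_eq_getElem hne]
            have h3 : u.length - 1 = i := by omega
            simp only [h3, List.get_eq_getElem]
          rw [h1, h2] at hhl
          exact (Option.some_injective _ hhl).symm
        rw [hieq]
        exact ⟨u.get ⟨1, by omega⟩, List.get_mem _ _,
          List.isChain_iff_getElem.mp hchain 0 (by omega)⟩
    -- the complement of occ u is a closed set containing the target
    have hW : (occ u)ᶜ ∈ {W : Set S |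
        {s ∈ B | SatState L θ s} ⊆ W ∧ ∀ s ∈ B, (∀ t : S, L.T s t → t ∈ W) → s ∈ W} := by
      constructor
      · intro s hs hsu
        exact havoid s hsu hs.2
      · intro s _ hall hsu
        obtain ⟨t, htu, hst⟩ := hsucc s hsu
        exact hall t hst htu
    have h0 : u.get ⟨0, by omega⟩ ∈ u := List.get_mem _ _
    have hmem : u.get ⟨0, by omega⟩ ∈ B := hocc h0
    rw [← hEq] at hmem
    exact hmem _ hW h0
  · intro hno
    apply Set.Subset.antisymm
    · intro s hs
      exact hs B ⟨fun t ht => ht.1, fun t htB _ => htB⟩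
    · by_contra hsub
      set A := SPredStar L B {s ∈ B | SatState L θ s} with hA
      have hAmem : {s ∈ B | SatState L θ s} ⊆ A ∧
          ∀ s ∈ B, (∀ t : S, L.T s t → t ∈ A) → s ∈ A := by
        constructor
        · intro s hs W hW
          exact hW.1 hs
        · intro s hsB hall W hW
          exact hW.2 s hsB (fun t ht => hall t ht W hW)
      obtain ⟨s₀, hs₀B, hs₀A⟩ : ∃ s, s ∈ B ∧ s ∉ A := by
        by_contra h
        push_neg at h
        exact hsub (fun s hs => h s hs)
      -- from any state of B \ A we can move to another state of B \ A
      have hstep : ∀ s, s ∈ B ∧ s ∉ A → ∃ t, L.T s t ∧ (t ∈ B ∧ t ∉ A) := by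
        rintro s ⟨hsB, hsA⟩
        by_contra h
        push_neg at h
        apply hsA
        apply hAmem.2 s hsB
        intro t ht
        by_contra htA
        exact htA (h t ht (hB.2 s hsB t ht))
      -- build an infinite run inside B \ A
      let X := {s : S // s ∈ B ∧ s ∉ A}
      let F : X → X := fun x => ⟨Classical.choose (hstep x.1 x.2),
        (Classical.choose_spec (hstep x.1 x.2)).2⟩
      have hF : ∀ x : X, L.T x.1 (F x).1 := fun x =>
        (Classical.choose_spec (hstep x.1 x.2)).1
      let x₀ : X := ⟨s₀, hs₀B, hs₀A⟩
      let ρ : ℕ → X := fun n => F^[n] x₀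
      have hρstep : ∀ n, L.T (ρ n).1 (ρ (n + 1)).1 := by
        intro n
        have : ρ (n + 1) = F (ρ n) := Function.iterate_succ_apply' F n x₀
        rw [this]
        exact hF (ρ n)
      obtain ⟨m, n, hmn, heqmn⟩ := Finite.exists_ne_map_eq_of_infinite ρ
      obtain ⟨i, j, hij, hρij⟩ : ∃ i j, i < j ∧ ρ i = ρ j := by
        rcases Nat.lt_or_ge m n with h | h
        · exact ⟨m, n, h, heqmn⟩
        · exact ⟨n, m, lt_of_le_of_ne h (Ne.symm hmn), heqmn.symm⟩
      apply hno
      refine ⟨(List.range (j - i + 1)).map (fun k => (ρ (i + k)).1), ⟨?_, ?_, ?_⟩, ?_, ?_⟩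
      · simp only [List.length_map, List.length_range]
        omega
      · rw [show List.Chain' L.T = List.IsChain L.T from rfl, List.isChain_map, List.isChain_range_succ]
        intro k _
        exact hρstep (i + k)
      · have h1 : ((List.range (j - i + 1)).map (fun k => (ρ (i + k)).1)).head?
            = some (ρ (i + 0)).1 := by
          rw [List.range_succ_eq_map]
          simp
        have h2 : ((List.range (j - i + 1)).map (fun k => (ρ (i + k)).1)).getLast?
            = some (ρ (i + (j - i))).1 := by
          rw [List.range_succ, List.map_append, List.map_cons, List.map_nil,
            List.getLast?_concat]
        rw [h1, h2]
        have : i + (j - i) = j := by omega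
        rw [this, Nat.add_zero, hρij]
      · intro s hs
        simp only [occ, Set.mem_setOf_eq, List.mem_map, List.mem_range] at hs
        obtain ⟨k, _, rfl⟩ := hs
        exact (ρ (i + k)).2.1
      · intro s hs
        simp only [List.mem_map, List.mem_range] at hs
        obtain ⟨k, _, rfl⟩ := hs
        intro hsat
        exact (ρ (i + k)).2.2 (hAmem.1 ⟨(ρ (i + k)).2.1, hsat⟩)
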